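/- Let K be a field of characteristic zero, A₁ = K⟨x,∂⟩ the first Weyl algebra acting on K[x], and 𝔸₁ the subalgebra of End_K(K[x]) generated by A₁ and H^{-1} where H = ∂x. Then F (the operators vanishing on x^i K[x] for some i) is the unique proper two-sided ideal of 𝔸₁; in particular F is a maximal ideal and every nonzero ideal of 𝔸₁ contains F. -/

import Mathlib

set_option synthInstance.maxHeartbeats 1000000
set_option maxHeartbeats 1000000

open Polynomial

/-- Multiplication by `x` on `K[x]`. -/
noncomputable def xO (K : Type*) [Field K] : Module.End K (Polynomial K) :=
  LinearMap.mulLeft K Polynomial.X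

/-- The derivative `∂` on `K[x]`. -/
noncomputable def dO (K : Type*) [Field K] : Module.End K (Polynomial K) :=
  (Polynomial.derivative : Polynomial K →ₗ[K] Polynomial K)

/-- The Jacobian algebra `𝔸₁`: the subalgebra of `End_K(K[x])` generated by the Weyl
algebra `K⟨x,∂⟩` together with the inverse of `H = ∂x`. -/
noncomputable def A1 (K : Type*) [Field K] : Subalgebra K (Module.End K (Polynomial K)) :=
  Algebra.adjoin K ({xO K, dO K} ∪
    {g | g * (dO K * xO K) = 1 ∧ (dO K * xO K) * g = 1})

/-- `I` is a two-sided ideal. -/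
def IsTwoSided {K A : Type*} [CommSemiring K] [Ring A] [Algebra K A]
    (I : Submodule K A) : Prop :=
  ∀ a ∈ I, ∀ r : A, r * a ∈ I ∧ a * r ∈ I

/-- The carrier of `F ⊆ 𝔸₁`: operators vanishing on `x^m K[x]` for some `m`. -/
def FCar (K : Type*) [Field K] : Set ↥(A1 K) :=
  {a | ∃ m : ℕ, ∀ p : Polynomial K,
    (a : Module.End K (Polynomial K)) (Polynomial.X ^ m * p) = 0}

section Basic

variable {K : Type*} [Field K] [CharZero K]

/-- `H = ∂ x`. -/
noncomputable def Hop (K : Type*) [Field K] : Module.End K (Polynomial K) := dO K * xO K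

/-- Matrix entries of an endomorphism of `K[x]` in the monomial basis. -/
noncomputable def ent (u : Module.End K (Polynomial K)) (i j : ℕ) : K :=
  coeff (u (X ^ j)) i

/-- Diagonal entry functions, indexed by the diagonal `d : ℤ`. -/
noncomputable def dg (u : Module.End K (Polynomial K)) (d : ℤ) (n : ℕ) : K :=
  if h : 0 ≤ (n : ℤ) + d then ent u ((n : ℤ) + d).toNat n else 0

lemma endExt {f g : Module.End K (Polynomial K)} (h : ∀ n : ℕ, f (X ^ n) = g (X ^ n)) :
    f = g := by
  refine LinearMap.ext fun p => ?_
  induction p using Polynomial.induction_on' with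
  | add p q hp hq => simp [map_add, hp, hq]
  | monomial n a =>
      rw [← smul_X_eq_monomial, map_smul, map_smul, h]

lemma diag_coeff {f : Module.End K (Polynomial K)} {c : ℕ → K}
    (h : ∀ n : ℕ, f (X ^ n) = c n • X ^ n) (p : Polynomial K) (m : ℕ) :
    coeff (f p) m = c m * coeff p m := by
  induction p using Polynomial.induction_on' with
  | add p q hp hq => simp [map_add, hp, hq, mul_add]
  | monomial n a =>
      rw [← smul_X_eq_monomial, map_smul, h]
      simp only [coeff_smul, smul_eq_mul, coeff_X_pow]
      by_cases hmn : m = n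
      · subst hmn; simp; ring
      · simp [hmn]

lemma xO_apply (p : Polynomial K) : xO K p = X * p := rfl

lemma xO_pow_apply (i n : ℕ) : ((xO K) ^ i) (X ^ n : Polynomial K) = X ^ (n + i) := by
  induction i with
  | zero => simp
  | succ i ih =>
      rw [pow_succ', Module.End.mul_apply, ih, xO_apply, ← add_assoc]
      ring

lemma dO_apply (p : Polynomial K) : dO K p = derivative p := rfl

lemma Hop_apply_pow (n : ℕ) : Hop K (X ^ n) = ((n : K) + 1) • X ^ n := by
  rw [Hop, Module.End.mul_apply, xO_apply, dO_apply]
  have hx : (X : Polynomial K) * X ^ n = X ^ (n + 1) := by ring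
  rw [hx, derivative_X_pow]
  have h2 : (n + 1 - 1) = n := rfl
  rw [h2, smul_eq_C_mul]
  norm_cast

lemma Hop_coeff (p : Polynomial K) (m : ℕ) :
    coeff (Hop K p) m = ((m : K) + 1) * coeff p m :=
  diag_coeff (c := fun n => (n : K) + 1) Hop_apply_pow p m

/-- The inverse of `H`. -/
noncomputable def Hinv (K : Type*) [Field K] : Module.End K (Polynomial K) :=
  (Polynomial.basisMonomials K).constr K (fun n => ((n : K) + 1)⁻¹ • X ^ n)

lemma basisMonomials_eq (n : ℕ) : (Polynomial.basisMonomials K) n = (X : Polynomial K) ^ n := by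
  simp [Polynomial.basisMonomials, toFinsuppIsoAlg, toFinsuppIso, ← Polynomial.ofFinsupp_single,
    Polynomial.monomial, X_pow_eq_monomial]
  rfl

lemma Hinv_apply_pow (n : ℕ) : Hinv K (X ^ n : Polynomial K) = ((n : K) + 1)⁻¹ • X ^ n := by
  have := Module.Basis.constr_basis (Polynomial.basisMonomials K) K
    (fun n => ((n : K) + 1)⁻¹ • (X : Polynomial K) ^ n) n
  rwa [basisMonomials_eq] at this

lemma Hinv_coeff (p : Polynomial K) (m : ℕ) :
    coeff (Hinv K p) m = ((m : K) + 1)⁻¹ * coeff p m :=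
  diag_coeff (c := fun n => ((n : K) + 1)⁻¹) Hinv_apply_pow p m

lemma nat_succ_ne_zero (n : ℕ) : ((n : K) + 1) ≠ 0 := by
  have : ((n + 1 : ℕ) : K) ≠ 0 := Nat.cast_ne_zero.mpr (Nat.succ_ne_zero n)
  simpa using this

lemma Hinv_mul_Hop : Hinv K * Hop K = 1 := by
  apply endExt
  intro n
  rw [Module.End.mul_apply, Hop_apply_pow, map_smul, Hinv_apply_pow]
  rw [smul_smul, mul_inv_cancel₀ (nat_succ_ne_zero n)]
  simp

lemma Hop_mul_Hinv : Hop K * Hinv K = 1 := by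
  apply endExt
  intro n
  rw [Module.End.mul_apply, Hinv_apply_pow, map_smul, Hop_apply_pow]
  rw [smul_smul, inv_mul_cancel₀ (nat_succ_ne_zero n)]
  simp

lemma HinvUnique {g : Module.End K (Polynomial K)}
    (h : g * (dO K * xO K) = 1 ∧ (dO K * xO K) * g = 1) : g = Hinv K := by
  have h1 : g * Hop K = 1 := h.1
  calc g = g * (Hop K * Hinv K) := by rw [Hop_mul_Hinv, mul_one]
    _ = (g * Hop K) * Hinv K := by rw [mul_assoc]
    _ = Hinv K := by rw [h1, one_mul]

lemma xO_mem : xO K ∈ A1 K := Algebra.subset_adjoin (Or.inl (Or.inl rfl))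
lemma dO_mem : dO K ∈ A1 K := Algebra.subset_adjoin (Or.inl (Or.inr rfl))
lemma Hinv_mem : Hinv K ∈ A1 K :=
  Algebra.subset_adjoin (Or.inr ⟨Hinv_mul_Hop, Hop_mul_Hinv⟩)
lemma Hop_mem : Hop K ∈ A1 K := mul_mem dO_mem xO_mem

end Basic
section FPart

variable {K : Type*} [Field K] [CharZero K]

lemma coeff_Xpow_mul (p : Polynomial K) (k i : ℕ) :
    coeff (X ^ k * p) i = if k ≤ i then coeff p (i - k) else 0 := by
  rw [mul_comm]; exact coeff_mul_X_pow' p k i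

/-- Right stability: elements of `A1` map `X^M K[x]` into `X^m K[x]`. -/
lemma Q_all {r : Module.End K (Polynomial K)} (hr : r ∈ A1 K) :
    ∀ m : ℕ, ∃ M : ℕ, ∀ p : Polynomial K, X ^ m ∣ r (X ^ M * p) := by
  induction hr using Algebra.adjoin_induction with
  | mem g hg =>
      rcases hg with (hg | hg) | hg
      · -- g = xO
        intro m; refine ⟨m, fun p => ⟨X * p, ?_⟩⟩
        rw [hg, xO_apply]; ring
      · -- g = dO
        intro m; refine ⟨m + 1, fun p => ?_⟩
        rw [hg, dO_apply, X_pow_dvd_iff]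
        intro d hd
        rw [coeff_derivative, coeff_Xpow_mul]
        have : ¬ (m + 1 ≤ d + 1) := by omega
        rw [if_neg this, zero_mul]
      · -- g = Hinv
        have hgH : g = Hinv K := HinvUnique hg
        intro m; refine ⟨m, fun p => ?_⟩
        rw [hgH, X_pow_dvd_iff]
        intro d hd
        rw [Hinv_coeff, coeff_Xpow_mul, if_neg (by omega), mul_zero]
  | algebraMap c =>
      intro m; refine ⟨m, fun p => ⟨c • p, ?_⟩⟩
      rw [Module.algebraMap_end_apply]
      exact (mul_smul_comm c _ _).symm
  | add r s hr hs ihr ihs =>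
      intro m
      obtain ⟨M₁, h₁⟩ := ihr m
      obtain ⟨M₂, h₂⟩ := ihs m
      refine ⟨M₁ + M₂, fun p => ?_⟩
      rw [LinearMap.add_apply]
      refine dvd_add ?_ ?_
      · have : X ^ (M₁ + M₂) * p = X ^ M₁ * (X ^ M₂ * p) := by rw [pow_add]; ring
        rw [this]; exact h₁ _
      · have : X ^ (M₁ + M₂) * p = X ^ M₂ * (X ^ M₁ * p) := by rw [pow_add]; ring
        rw [this]; exact h₂ _
  | mul r s hr hs ihr ihs =>
      intro m
      obtain ⟨M₁, h₁⟩ := ihr m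
      obtain ⟨M₂, h₂⟩ := ihs M₁
      refine ⟨M₂, fun p => ?_⟩
      rw [Module.End.mul_apply]
      obtain ⟨q, hq⟩ := h₂ p
      rw [hq]
      exact h₁ q

/-- `F` as a submodule of `A1`. -/
noncomputable def Fid (K : Type*) [Field K] [CharZero K] : Submodule K ↥(A1 K) where
  carrier := FCar K
  zero_mem' := ⟨0, fun p => by simp⟩
  add_mem' := by
    rintro a b ⟨m₁, h₁⟩ ⟨m₂, h₂⟩
    refine ⟨m₁ + m₂, fun p => ?_⟩
    have e1 : (X : Polynomial K) ^ (m₁ + m₂) * p = X ^ m₁ * (X ^ m₂ * p) := by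
      rw [pow_add]; ring
    have e2 : (X : Polynomial K) ^ (m₁ + m₂) * p = X ^ m₂ * (X ^ m₁ * p) := by
      rw [pow_add]; ring
    have : ((a + b : ↥(A1 K)) : Module.End K (Polynomial K)) (X ^ (m₁ + m₂) * p)
        = (a : Module.End K (Polynomial K)) (X ^ m₁ * (X ^ m₂ * p))
          + (b : Module.End K (Polynomial K)) (X ^ m₂ * (X ^ m₁ * p)) := by
      push_cast
      rw [LinearMap.add_apply]
      rw [← e1, ← e2]
    rw [this, h₁, h₂, add_zero]
  smul_mem' := by
    rintro c a ⟨m, h⟩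
    refine ⟨m, fun p => ?_⟩
    have : ((c • a : ↥(A1 K)) : Module.End K (Polynomial K)) (X ^ m * p)
        = c • (a : Module.End K (Polynomial K)) (X ^ m * p) := by
      push_cast
      rw [LinearMap.smul_apply]
    rw [this, h, smul_zero]

lemma mem_Fid {a : ↥(A1 K)} :
    a ∈ Fid K ↔ ∃ m : ℕ, ∀ p : Polynomial K,
      (a : Module.End K (Polynomial K)) (X ^ m * p) = 0 := Iff.rfl

lemma mem_Fid_of_vanish {a : ↥(A1 K)} {m : ℕ}
    (h : ∀ n : ℕ, m ≤ n → (a : Module.End K (Polynomial K)) (X ^ n) = 0) :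
    a ∈ Fid K := by
  refine ⟨m, fun p => ?_⟩
  induction p using Polynomial.induction_on' with
  | add p q hp hq => rw [mul_add, map_add, hp, hq, add_zero]
  | monomial k c =>
      have : (X : Polynomial K) ^ m * monomial k c = c • X ^ (m + k) := by
        rw [X_pow_eq_monomial, monomial_mul_monomial, one_mul, smul_X_eq_monomial]
      rw [this, map_smul, h (m + k) (Nat.le_add_right m k), smul_zero]

lemma Fid_isTwoSided : IsTwoSided (K := K) (A := ↥(A1 K)) (Fid K) := by
  rintro a ⟨m, hm⟩ r
  constructor
  · refine ⟨m, fun p => ?_⟩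
    have : ((r * a : ↥(A1 K)) : Module.End K (Polynomial K)) (X ^ m * p)
        = (r : Module.End K (Polynomial K)) ((a : Module.End K (Polynomial K)) (X ^ m * p)) := by
      push_cast; rw [Module.End.mul_apply]
    rw [this, hm, map_zero]
  · obtain ⟨M, hM⟩ := Q_all r.2 m
    refine ⟨M, fun p => ?_⟩
    obtain ⟨q, hq⟩ := hM p
    have : ((a * r : ↥(A1 K)) : Module.End K (Polynomial K)) (X ^ M * p)
        = (a : Module.End K (Polynomial K)) ((r : Module.End K (Polynomial K)) (X ^ M * p)) := by
      push_cast; rw [Module.End.mul_apply]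
    rw [this, hq, hm]

/-- The rank-one projection onto constants. -/
noncomputable def eop (K : Type*) [Field K] [CharZero K] : Module.End K (Polynomial K) :=
  1 - xO K * (Hinv K * dO K)

lemma eop_apply (p : Polynomial K) : eop K p = C (coeff p 0) := by
  apply Polynomial.ext
  intro i
  have : eop K p = p - xO K (Hinv K (dO K p)) := by
    simp [eop, LinearMap.sub_apply, Module.End.mul_apply]
  rw [this, coeff_sub, xO_apply]
  cases i with
  | zero => simp [coeff_C]
  | succ j =>
      rw [coeff_X_mul, Hinv_coeff, dO_apply, coeff_derivative, coeff_C]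
      have hj : ((j : K) + 1) ≠ 0 := nat_succ_ne_zero j
      field_simp
      simp
lemma eop_mem : eop K ∈ A1 K := by
  have : eop K = 1 - xO K * (Hinv K * dO K) := rfl
  rw [this]
  exact sub_mem (one_mem _) (mul_mem xO_mem (mul_mem Hinv_mem dO_mem))

/-- Subtype elements. -/
noncomputable def xsK (K : Type*) [Field K] [CharZero K] : ↥(A1 K) := ⟨xO K, xO_mem⟩
noncomputable def dsK (K : Type*) [Field K] [CharZero K] : ↥(A1 K) := ⟨dO K, dO_mem⟩
noncomputable def hsK (K : Type*) [Field K] [CharZero K] : ↥(A1 K) := ⟨Hop K, Hop_mem⟩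
noncomputable def hinvsK (K : Type*) [Field K] [CharZero K] : ↥(A1 K) := ⟨Hinv K, Hinv_mem⟩
noncomputable def esK (K : Type*) [Field K] [CharZero K] : ↥(A1 K) := ⟨eop K, eop_mem⟩
noncomputable def E0is (K : Type*) [Field K] [CharZero K] (i : ℕ) : ↥(A1 K) :=
  esK K * (((i.factorial : K))⁻¹ • dsK K ^ i)
noncomputable def Ej0s (K : Type*) [Field K] [CharZero K] (j : ℕ) : ↥(A1 K) :=
  xsK K ^ j * esK K
noncomputable def Ejjs (K : Type*) [Field K] [CharZero K] (j : ℕ) : ↥(A1 K) :=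
  xsK K ^ j * E0is K j

lemma dO_pow_coeff (i : ℕ) (p : Polynomial K) (m : ℕ) :
    coeff (((dO K) ^ i) p) m = ((m + i).descFactorial i : K) * coeff p (m + i) := by
  rw [Module.End.pow_apply]
  have : (⇑(dO K))^[i] p = (⇑(derivative (R := K)))^[i] p := rfl
  rw [this, Polynomial.coeff_iterate_derivative]
  simp [nsmul_eq_mul]

lemma E0is_apply (i : ℕ) (p : Polynomial K) :
    ((E0is K i : ↥(A1 K)) : Module.End K (Polynomial K)) p = C (coeff p i) := by
  have hval : ((E0is K i : ↥(A1 K)) : Module.End K (Polynomial K))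
      = eop K * (((i.factorial : K))⁻¹ • (dO K) ^ i) := rfl
  rw [hval, Module.End.mul_apply, LinearMap.smul_apply, map_smul, eop_apply, dO_pow_coeff]
  rw [zero_add, Nat.descFactorial_self]
  rw [smul_C]
  congr 1
  rw [smul_eq_mul, ← mul_assoc,
    inv_mul_cancel₀ (Nat.cast_ne_zero.mpr (Nat.factorial_ne_zero i)), one_mul]

lemma esK_applyX (k : ℕ) :
    ((esK K : ↥(A1 K)) : Module.End K (Polynomial K)) (X ^ k)
      = if k = 0 then 1 else 0 := by
  have : ((esK K : ↥(A1 K)) : Module.End K (Polynomial K)) = eop K := rfl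
  rw [this, eop_apply, coeff_X_pow]
  by_cases hk : k = 0
  · simp [hk]
  · rw [if_neg (fun h => hk h.symm), if_neg hk, C_0]

lemma Ej0s_applyX (j k : ℕ) :
    ((Ej0s K j : ↥(A1 K)) : Module.End K (Polynomial K)) (X ^ k)
      = if k = 0 then X ^ j else 0 := by
  have hval : ((Ej0s K j : ↥(A1 K)) : Module.End K (Polynomial K))
      = (xO K) ^ j * eop K := rfl
  rw [hval, Module.End.mul_apply]
  have : eop K (X ^ k : Polynomial K) = if k = 0 then 1 else 0 := esK_applyX k
  rw [this]
  by_cases hk : k = 0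
  · rw [if_pos hk, if_pos hk]
    have : ((xO K) ^ j) (1 : Polynomial K) = X ^ j := by
      have h1 : (1 : Polynomial K) = X ^ 0 := by simp
      rw [h1, xO_pow_apply, zero_add]
    exact this
  · rw [if_neg hk, if_neg hk, map_zero]

lemma Ejjs_applyX (j k : ℕ) :
    ((Ejjs K j : ↥(A1 K)) : Module.End K (Polynomial K)) (X ^ k)
      = if k = j then X ^ j else 0 := by
  have hval : ((Ejjs K j : ↥(A1 K)) : Module.End K (Polynomial K))
      = (xO K) ^ j * ((E0is K j : ↥(A1 K)) : Module.End K (Polynomial K)) := rfl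
  rw [hval, Module.End.mul_apply, E0is_apply, coeff_X_pow]
  by_cases hk : k = j
  · subst hk
    rw [if_pos rfl, if_pos rfl, C_1]
    have h1 : (1 : Polynomial K) = X ^ 0 := by simp
    rw [h1, xO_pow_apply, zero_add]
  · have : ¬ (j = k) := fun h => hk h.symm
    rw [if_neg this, if_neg hk, C_0, map_zero]

lemma esK_mem_I {I : Submodule K ↥(A1 K)} (hI : IsTwoSided (K := K) (A := ↥(A1 K)) I)
    {a : ↥(A1 K)} (haI : a ∈ I) (ha : a ≠ 0) : esK K ∈ I := by
  -- find j with a (X^j) ≠ 0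
  have hj : ∃ j : ℕ, (a : Module.End K (Polynomial K)) (X ^ j) ≠ 0 := by
    by_contra h
    push_neg at h
    apply ha
    have : (a : Module.End K (Polynomial K)) = 0 := endExt fun n => by
      rw [h n]; rfl
    exact Subtype.ext this
  obtain ⟨j, hj⟩ := hj
  set q : Polynomial K := (a : Module.End K (Polynomial K)) (X ^ j) with hq
  have hi : ∃ i : ℕ, coeff q i ≠ 0 := by
    by_contra h
    push_neg at h
    exact hj (Polynomial.ext h)
  obtain ⟨i, hi⟩ := hi
  set c : ↥(A1 K) := E0is K i * a * Ej0s K j with hc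
  have hcI : c ∈ I := by
    have h1 : E0is K i * a ∈ I := (hI a haI (E0is K i)).1
    exact (hI _ h1 (Ej0s K j)).2
  have hkey : c = coeff q i • esK K := by
    apply Subtype.ext
    apply endExt
    intro k
    have hcval : ((c : ↥(A1 K)) : Module.End K (Polynomial K)) (X ^ k)
        = ((E0is K i : ↥(A1 K)) : Module.End K (Polynomial K))
          ((a : Module.End K (Polynomial K))
            (((Ej0s K j : ↥(A1 K)) : Module.End K (Polynomial K)) (X ^ k))) := by
      rw [hc]
      push_cast
      rw [Module.End.mul_apply, Module.End.mul_apply]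
    rw [hcval, Ej0s_applyX]
    have hrhs : ((coeff q i • esK K : ↥(A1 K)) : Module.End K (Polynomial K)) (X ^ k)
        = coeff q i • (((esK K : ↥(A1 K)) : Module.End K (Polynomial K)) (X ^ k)) := by
      push_cast
      rw [LinearMap.smul_apply]
    rw [hrhs, esK_applyX]
    by_cases hk : k = 0
    · rw [if_pos hk, if_pos hk, ← hq, E0is_apply, smul_eq_C_mul, mul_one]
    · rw [if_neg hk, if_neg hk, map_zero, map_zero, smul_zero]
  have : esK K = (coeff q i)⁻¹ • c := by
    rw [hkey, smul_smul, inv_mul_cancel₀ hi, one_smul]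
  rw [this]
  exact Submodule.smul_mem I _ hcI

lemma Ejjs_mem_I {I : Submodule K ↥(A1 K)} (hI : IsTwoSided (K := K) (A := ↥(A1 K)) I)
    (he : esK K ∈ I) (j : ℕ) : Ejjs K j ∈ I := by
  have h1 : E0is K j ∈ I := (hI _ he _).2
  exact (hI _ h1 _).1

lemma Fid_le_I {I : Submodule K ↥(A1 K)} (hI : IsTwoSided (K := K) (A := ↥(A1 K)) I) (hne : I ≠ ⊥) :
    Fid K ≤ I := by
  obtain ⟨a₀, ha₀I, ha₀⟩ := (Submodule.ne_bot_iff I).mp hne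
  have he : esK K ∈ I := esK_mem_I hI ha₀I ha₀
  intro a ha
  obtain ⟨m, hm⟩ := ha
  have key : a = ∑ j ∈ Finset.range m, a * Ejjs K j := by
    apply Subtype.ext
    apply endExt
    intro k
    have hsum : ((∑ j ∈ Finset.range m, a * Ejjs K j : ↥(A1 K))
        : Module.End K (Polynomial K)) (X ^ k)
        = ∑ j ∈ Finset.range m,
            (a : Module.End K (Polynomial K))
              (((Ejjs K j : ↥(A1 K)) : Module.End K (Polynomial K)) (X ^ k)) := by
      rw [AddSubmonoidClass.coe_finset_sum, LinearMap.sum_apply]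
      refine Finset.sum_congr rfl fun j _ => ?_
      push_cast
      rw [Module.End.mul_apply]
    rw [hsum]
    have : ∀ j ∈ Finset.range m,
        (a : Module.End K (Polynomial K))
          (((Ejjs K j : ↥(A1 K)) : Module.End K (Polynomial K)) (X ^ k))
        = if k = j then (a : Module.End K (Polynomial K)) (X ^ k) else 0 := by
      intro j _
      rw [Ejjs_applyX]
      by_cases hk : k = j
      · rw [if_pos hk, if_pos hk, hk]
      · rw [if_neg hk, if_neg hk, map_zero]
    rw [Finset.sum_congr rfl this, Finset.sum_ite_eq]
    by_cases hk : k ∈ Finset.range m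
    · rw [if_pos hk]
    · rw [if_neg hk]
      have hkm : m ≤ k := by
        by_contra h
        exact hk (Finset.mem_range.mpr (by omega))
      have : (X : Polynomial K) ^ k = X ^ m * X ^ (k - m) := by
        rw [← pow_add]
        congr 1
        omega
      rw [this, hm]
  rw [key]
  refine Submodule.sum_mem I fun j _ => ?_
  exact (hI _ (Ejjs_mem_I hI he j) a).1

lemma esK_mem_Fid : esK K ∈ Fid K := by
  refine ⟨1, fun p => ?_⟩
  have : ((esK K : ↥(A1 K)) : Module.End K (Polynomial K)) (X ^ 1 * p)
      = C (coeff (X ^ 1 * p) 0) := eop_apply _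
  rw [this, coeff_Xpow_mul]
  simp

lemma Fid_ne_bot : Fid K ≠ ⊥ := by
  rw [Submodule.ne_bot_iff]
  refine ⟨esK K, esK_mem_Fid, fun h => ?_⟩
  have : ((esK K : ↥(A1 K)) : Module.End K (Polynomial K)) (X ^ 0) = 0 := by
    rw [h]; rfl
  rw [esK_applyX] at this
  rw [if_pos rfl] at this
  exact one_ne_zero this

lemma Fid_ne_top : Fid K ≠ ⊤ := by
  intro h
  have h1 : (1 : ↥(A1 K)) ∈ Fid K := h ▸ Submodule.mem_top
  obtain ⟨m, hm⟩ := h1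
  have := hm 1
  have h2 : ((1 : ↥(A1 K)) : Module.End K (Polynomial K)) (X ^ m * 1) = X ^ m := by
    rw [mul_one]; rfl
  rw [h2] at this
  exact pow_ne_zero m Polynomial.X_ne_zero this
/-! ### Eventually rational functions -/

/-- `φ : ℕ → K` is eventually a rational function. -/
def ER {K : Type*} [Field K] (φ : ℕ → K) : Prop :=
  ∃ f g : Polynomial K, g ≠ 0 ∧ ∃ N : ℕ, ∀ n : ℕ, N ≤ n →
    φ n * g.eval (n : K) = f.eval (n : K)

lemma poly_eventually_ne_zero {g : Polynomial K} (hg : g ≠ 0) :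
    ∃ N : ℕ, ∀ n : ℕ, N ≤ n → g.eval (n : K) ≠ 0 := by
  classical
  have hfin : Set.Finite {n : ℕ | g.eval (n : K) = 0} := by
    have hsub : {n : ℕ | g.eval (n : K) = 0} ⊆
        (fun n : ℕ => (n : K)) ⁻¹' (g.roots.toFinset : Set K) := by
      intro n hn
      simp only [Set.mem_preimage, Finset.coe_sort_coe, Multiset.mem_toFinset, Finset.mem_coe]
      exact (Polynomial.mem_roots hg).mpr hn
    refine Set.Finite.subset ?_ hsub
    refine Set.Finite.preimage ?_ (Set.finite_coe_iff.mp ?_)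
    · exact Set.injOn_of_injective Nat.cast_injective
    · exact Set.toFinite _
  obtain ⟨N, hN⟩ := hfin.bddAbove
  refine ⟨N + 1, fun n hn h => ?_⟩
  have : n ≤ N := hN h
  omega

lemma ER_congr {φ φ' : ℕ → K} (h : ∃ N, ∀ n, N ≤ n → φ n = φ' n) (hφ : ER φ) : ER φ' := by
  obtain ⟨N₁, hN₁⟩ := h
  obtain ⟨f, g, hg, N₂, hN₂⟩ := hφ
  exact ⟨f, g, hg, max N₁ N₂, fun n hn => by
    rw [← hN₁ n (le_trans (le_max_left _ _) hn)]
    exact hN₂ n (le_trans (le_max_right _ _) hn)⟩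

lemma ER_zero : ER (fun _ : ℕ => (0 : K)) := ⟨0, 1, one_ne_zero, 0, fun n _ => by simp⟩

lemma ER_const (c : K) : ER (fun _ : ℕ => c) := ⟨C c, 1, one_ne_zero, 0, fun n _ => by simp⟩

lemma ER_add {φ ψ : ℕ → K} (hφ : ER φ) (hψ : ER ψ) : ER (fun n => φ n + ψ n) := by
  obtain ⟨f₁, g₁, hg₁, N₁, h₁⟩ := hφ
  obtain ⟨f₂, g₂, hg₂, N₂, h₂⟩ := hψ
  refine ⟨f₁ * g₂ + f₂ * g₁, g₁ * g₂, mul_ne_zero hg₁ hg₂, max N₁ N₂, fun n hn => ?_⟩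
  have e₁ := h₁ n (le_trans (le_max_left _ _) hn)
  have e₂ := h₂ n (le_trans (le_max_right _ _) hn)
  simp only [Polynomial.eval_mul, Polynomial.eval_add]
  calc (φ n + ψ n) * (g₁.eval (n:K) * g₂.eval (n:K))
      = (φ n * g₁.eval (n:K)) * g₂.eval (n:K) + (ψ n * g₂.eval (n:K)) * g₁.eval (n:K) := by ring
    _ = f₁.eval (n:K) * g₂.eval (n:K) + f₂.eval (n:K) * g₁.eval (n:K) := by rw [e₁, e₂]

lemma ER_mul {φ ψ : ℕ → K} (hφ : ER φ) (hψ : ER ψ) : ER (fun n => φ n * ψ n) := by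
  obtain ⟨f₁, g₁, hg₁, N₁, h₁⟩ := hφ
  obtain ⟨f₂, g₂, hg₂, N₂, h₂⟩ := hψ
  refine ⟨f₁ * f₂, g₁ * g₂, mul_ne_zero hg₁ hg₂, max N₁ N₂, fun n hn => ?_⟩
  have e₁ := h₁ n (le_trans (le_max_left _ _) hn)
  have e₂ := h₂ n (le_trans (le_max_right _ _) hn)
  simp only [Polynomial.eval_mul]
  calc φ n * ψ n * (g₁.eval (n:K) * g₂.eval (n:K))
      = (φ n * g₁.eval (n:K)) * (ψ n * g₂.eval (n:K)) := by ring
    _ = f₁.eval (n:K) * f₂.eval (n:K) := by rw [e₁, e₂]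

lemma ER_smul (c : K) {φ : ℕ → K} (hφ : ER φ) : ER (fun n => c * φ n) :=
  ER_mul (ER_const c) hφ

lemma ER_sum {ι : Type*} (s : Finset ι) (φ : ι → ℕ → K) (h : ∀ i ∈ s, ER (φ i)) :
    ER (fun n => ∑ i ∈ s, φ i n) := by
  classical
  induction s using Finset.induction_on with
  | empty => simpa using ER_zero
  | insert a s hne ih =>
      rw [show (fun n => ∑ i ∈ insert a s, φ i n)
          = fun n => φ a n + ∑ i ∈ s, φ i n from funext fun n => Finset.sum_insert hne]
      exact ER_add (h a (Finset.mem_insert_self a s))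
        (ih fun i hi => h i (Finset.mem_insert_of_mem hi))

lemma ER_shift_add (a : ℕ) {φ : ℕ → K} (hφ : ER φ) : ER (fun n => φ (n + a)) := by
  obtain ⟨f, g, hg, N, h⟩ := hφ
  refine ⟨f.comp (X + C (a : K)), g.comp (X + C (a : K)), fun hc => hg ?_, N, fun n hn => ?_⟩
  · have : (g.comp (X + C (a : K))).comp (X - C (a : K)) = g := by
      rw [Polynomial.comp_assoc]
      simp
    rw [hc] at this
    simp at this
    exact this.symm
  · have e : ∀ q : Polynomial K, (q.comp (X + C (a : K))).eval (n : K) = q.eval ((n + a : ℕ) : K) := by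
      intro q
      rw [Polynomial.eval_comp]
      push_cast
      simp
    rw [e, e]
    exact h (n + a) (by omega)

lemma ER_shift_sub (a : ℕ) {φ : ℕ → K} (hφ : ER φ) : ER (fun n => φ (n - a)) := by
  obtain ⟨f, g, hg, N, h⟩ := hφ
  refine ⟨f.comp (X - C (a : K)), g.comp (X - C (a : K)), fun hc => hg ?_, N + a, fun n hn => ?_⟩
  · have : (g.comp (X - C (a : K))).comp (X + C (a : K)) = g := by
      rw [Polynomial.comp_assoc]
      simp
    rw [hc] at this
    simp at this
    exact this.symm
  · have e : ∀ q : Polynomial K, (q.comp (X - C (a : K))).eval (n : K) = q.eval ((n - a : ℕ) : K) := by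
      intro q
      rw [Polynomial.eval_comp]
      simp only [Polynomial.eval_sub, Polynomial.eval_X, Polynomial.eval_C]
      congr 1
      have : ((n - a : ℕ) : K) = (n : K) - (a : K) := by
        have hna : a ≤ n := by omega
        push_cast [hna]
        ring
      rw [this]
    rw [e, e]
    exact h (n - a) (by omega)

/-! ### Banded operators with rational diagonals -/

lemma dg_nonneg {u : Module.End K (Polynomial K)} {d : ℤ} {n : ℕ} (h : 0 ≤ (n : ℤ) + d) :
    dg u d n = ent u ((n : ℤ) + d).toNat n := dif_pos h

lemma dg_neg {u : Module.End K (Polynomial K)} {d : ℤ} {n : ℕ} (h : (n : ℤ) + d < 0) :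
    dg u d n = 0 := dif_neg (not_le.mpr h)

lemma ent_eq_dg (u : Module.End K (Polynomial K)) (i j : ℕ) :
    ent u i j = dg u ((i : ℤ) - j) j := by
  rw [dg_nonneg (by omega)]
  congr 1
  omega

/-- `u` is supported on the band of diagonals `|d| ≤ D`. -/
def Band {K : Type*} [Field K] (u : Module.End K (Polynomial K)) (D : ℕ) : Prop :=
  ∀ (d : ℤ) (n : ℕ), (D : ℤ) < |d| → dg u d n = 0

lemma band_ent {u : Module.End K (Polynomial K)} {D : ℕ} (hu : Band u D)
    {i j : ℕ} (h : (D : ℤ) < |(i : ℤ) - j|) : ent u i j = 0 := by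
  rw [ent_eq_dg]; exact hu _ _ h

/-- The key structural property of elements of `A1`. -/
def PP {K : Type*} [Field K] (u : Module.End K (Polynomial K)) : Prop :=
  (∃ D, Band u D) ∧ ∀ d : ℤ, ER (dg u d)

lemma poly_sum_of_coeff_bound {q : Polynomial K} {M : ℕ}
    (h : ∀ k, M ≤ k → coeff q k = 0) :
    q = ∑ k ∈ Finset.range M, coeff q k • X ^ k := by
  apply Polynomial.ext
  intro m
  rw [Polynomial.finset_sum_coeff]
  have : ∀ k ∈ Finset.range M, coeff (coeff q k • (X : Polynomial K) ^ k) m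
      = if m = k then coeff q m else 0 := by
    intro k _
    rw [coeff_smul, coeff_X_pow, smul_eq_mul]
    by_cases hmk : m = k
    · rw [if_pos hmk, if_pos hmk, hmk, mul_one]
    · rw [if_neg hmk, if_neg hmk, mul_zero]
  rw [Finset.sum_congr rfl this, Finset.sum_ite_eq]
  by_cases hm : m ∈ Finset.range M
  · rw [if_pos hm]
  · rw [if_neg hm]
    exact h m (by simpa using hm)

lemma ent_mul {u v : Module.End K (Polynomial K)} {D₂ : ℕ} (hv : Band v D₂) (i j : ℕ) :
    ent (u * v) i j = ∑ k ∈ Finset.range (j + D₂ + 1), ent v k j * ent u i k := by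
  have hq : ∀ k, j + D₂ + 1 ≤ k → coeff (v (X ^ j)) k = 0 := by
    intro k hk
    exact band_ent hv (by rw [lt_abs]; omega)
  have hsum : v (X ^ j) = ∑ k ∈ Finset.range (j + D₂ + 1), ent v k j • X ^ k :=
    poly_sum_of_coeff_bound hq
  rw [ent, Module.End.mul_apply, hsum, map_sum]
  rw [Polynomial.finset_sum_coeff]
  refine Finset.sum_congr rfl fun k _ => ?_
  rw [map_smul, coeff_smul, smul_eq_mul]
  rfl

lemma Band_mul {u v : Module.End K (Polynomial K)} {D₁ D₂ : ℕ}
    (hu : Band u D₁) (hv : Band v D₂) : Band (u * v) (D₁ + D₂) := by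
  intro d n hd
  by_cases hnd : 0 ≤ (n : ℤ) + d
  · rw [dg_nonneg hnd, ent_mul hv]
    refine Finset.sum_eq_zero fun k _ => ?_
    by_cases hk : (D₂ : ℤ) < |(k : ℤ) - n|
    · rw [band_ent hv hk, zero_mul]
    · rw [not_lt, abs_le] at hk
      rw [lt_abs] at hd
      have hi : ((((n : ℤ) + d).toNat : ℤ)) = (n : ℤ) + d := Int.toNat_of_nonneg hnd
      have : (D₁ : ℤ) < |((((n : ℤ) + d).toNat : ℤ)) - k| := by
        rw [lt_abs]; omega
      rw [band_ent hu this, mul_zero]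
  · exact dg_neg (by omega)

lemma dg_mul_eventual {u v : Module.End K (Polynomial K)} {D₂ : ℕ}
    (hv : Band v D₂) (d : ℤ) (n : ℕ) (hn : D₂ ≤ n) :
    dg (u * v) d n = ∑ e ∈ Finset.range (2 * D₂ + 1),
      dg v ((e : ℤ) - D₂) n * dg u (d - ((e : ℤ) - D₂)) (n + e - D₂) := by
  by_cases hnd : 0 ≤ (n : ℤ) + d
  · rw [dg_nonneg hnd, ent_mul hv]
    have step1 : ∑ k ∈ Finset.range (n + D₂ + 1), ent v k n * ent u (((n : ℤ) + d).toNat) k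
        = ∑ k ∈ Finset.Ico (n - D₂) (n + D₂ + 1), ent v k n * ent u (((n : ℤ) + d).toNat) k := by
      symm
      apply Finset.sum_subset
      · intro k hk
        rw [Finset.mem_Ico] at hk
        rw [Finset.mem_range]
        omega
      · intro k hk hk2
        rw [Finset.mem_range] at hk
        rw [Finset.mem_Ico, not_and_or] at hk2
        have hklt : k < n - D₂ := by omega
        have : (D₂ : ℤ) < |(k : ℤ) - n| := by rw [lt_abs]; omega
        rw [band_ent hv this, zero_mul]
    rw [step1, Finset.sum_Ico_eq_sum_range]
    have hrange : n + D₂ + 1 - (n - D₂) = 2 * D₂ + 1 := by omega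
    rw [hrange]
    refine Finset.sum_congr rfl fun e he => ?_
    rw [Finset.mem_range] at he
    have hk1 : n - D₂ + e = n + e - D₂ := by omega
    rw [hk1]
    congr 1
    · rw [ent_eq_dg]
      congr 1
      push_cast [Nat.cast_sub (by omega : D₂ ≤ n + e)]
      ring
    · have h0 : 0 ≤ ((n + e - D₂ : ℕ) : ℤ) + (d - ((e : ℤ) - D₂)) := by
        push_cast [Nat.cast_sub (by omega : D₂ ≤ n + e)]
        omega
      rw [dg_nonneg h0]
      congr 1
      push_cast [Nat.cast_sub (by omega : D₂ ≤ n + e)]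
      omega
  · rw [dg_neg (by omega)]
    symm
    refine Finset.sum_eq_zero fun e he => ?_
    have : ((n + e - D₂ : ℕ) : ℤ) + (d - ((e : ℤ) - D₂)) < 0 := by
      rw [Finset.mem_range] at he
      push_cast [Nat.cast_sub (by omega : D₂ ≤ n + e)]
      omega
    rw [dg_neg this, mul_zero]

lemma dg_add (u v : Module.End K (Polynomial K)) (d : ℤ) (n : ℕ) :
    dg (u + v) d n = dg u d n + dg v d n := by
  unfold dg
  by_cases h : 0 ≤ (n : ℤ) + d
  · rw [dif_pos h, dif_pos h, dif_pos h]
    unfold ent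
    rw [LinearMap.add_apply, coeff_add]
  · rw [dif_neg h, dif_neg h, dif_neg h, add_zero]

lemma dg_smul (c : K) (u : Module.End K (Polynomial K)) (d : ℤ) (n : ℕ) :
    dg (c • u) d n = c * dg u d n := by
  unfold dg
  by_cases h : 0 ≤ (n : ℤ) + d
  · rw [dif_pos h, dif_pos h]
    unfold ent
    rw [LinearMap.smul_apply, coeff_smul, smul_eq_mul]
  · rw [dif_neg h, dif_neg h, mul_zero]

lemma PP_all {u : Module.End K (Polynomial K)} (hu : u ∈ A1 K) : PP u := by
  induction hu using Algebra.adjoin_induction with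
  | mem g hg =>
      rcases hg with (hg | hg) | hg
      · -- xO
        subst hg
        have hdg : ∀ (d : ℤ) (n : ℕ), dg (xO K) d n = if d = 1 then 1 else 0 := by
          intro d n
          by_cases h : 0 ≤ (n : ℤ) + d
          · rw [dg_nonneg h]
            unfold ent
            rw [xO_apply]
            have : (X : Polynomial K) * X ^ n = X ^ (n + 1) := by ring
            rw [this, coeff_X_pow]
            by_cases hd : d = 1
            · rw [if_pos hd, if_pos (by omega : ((n:ℤ)+d).toNat = n+1)]
            · rw [if_neg hd, if_neg (by omega : ¬ ((n:ℤ)+d).toNat = n+1)]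
          · rw [dg_neg (by omega), if_neg (by omega : ¬ d = 1)]
        constructor
        · exact ⟨1, fun d n hd => by rw [hdg, if_neg (by rw [lt_abs] at hd; omega)]⟩
        · intro d
          by_cases hd : d = 1
          · exact ER_congr ⟨0, fun n _ => (by rw [hdg, if_pos hd] : dg (xO K) d n = 1).symm⟩ (ER_const 1)
          · exact ER_congr ⟨0, fun n _ => (by rw [hdg, if_neg hd] : dg (xO K) d n = 0).symm⟩ ER_zero
      · -- dO
        subst hg
        have hdg : ∀ (d : ℤ) (n : ℕ), 1 ≤ n → dg (dO K) d n = if d = -1 then (n : K) else 0 := by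
          intro d n hn
          by_cases h : 0 ≤ (n : ℤ) + d
          · rw [dg_nonneg h]
            unfold ent
            rw [dO_apply, derivative_X_pow]
            rw [coeff_C_mul, coeff_X_pow]
            by_cases hd : d = -1
            · rw [if_pos hd, if_pos (by omega : ((n:ℤ)+d).toNat = n - 1), mul_one]
            · rw [if_neg hd, if_neg (by omega : ¬ ((n:ℤ)+d).toNat = n - 1), mul_zero]
          · rw [dg_neg (by omega), if_neg (by omega : ¬ d = -1)]
        constructor
        · refine ⟨1, fun d n hd => ?_⟩
          rcases Nat.eq_zero_or_pos n with hn | hn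
          · subst hn
            by_cases h : 0 ≤ (0 : ℤ) + d
            · rw [dg_nonneg h]
              unfold ent
              rw [dO_apply, pow_zero]
              simp
            · exact dg_neg (by omega)
          · rw [hdg d n hn, if_neg (by rw [lt_abs] at hd; omega)]
        · intro d
          by_cases hd : d = -1
          · refine ER_congr ⟨1, fun n hn => ?_⟩ (⟨X, 1, one_ne_zero, 0, fun n _ => by simp⟩ : ER (fun n : ℕ => (n : K)))
            rw [hdg d n hn, if_pos hd]
          · exact ER_congr ⟨1, fun n hn => (by rw [hdg d n hn, if_neg hd] : dg (dO K) d n = 0).symm⟩ ER_zero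
      · -- Hinv
        have hgH : g = Hinv K := HinvUnique hg
        subst hgH
        have hdg : ∀ (d : ℤ) (n : ℕ), dg (Hinv K) d n
            = if d = 0 then ((n : K) + 1)⁻¹ else 0 := by
          intro d n
          by_cases h : 0 ≤ (n : ℤ) + d
          · rw [dg_nonneg h]
            unfold ent
            rw [Hinv_coeff, coeff_X_pow]
            by_cases hd : d = 0
            · rw [if_pos hd, if_pos (by omega : ((n:ℤ)+d).toNat = n), mul_one]
              rw [(by omega : ((n:ℤ)+d).toNat = n)]
            · rw [if_neg hd, if_neg (by omega : ¬ ((n:ℤ)+d).toNat = n), mul_zero]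
          · rw [dg_neg (by omega), if_neg (by omega : ¬ d = 0)]
        constructor
        · exact ⟨0, fun d n hd => by
            rw [hdg, if_neg (by rw [lt_abs] at hd; omega)]⟩
        · intro d
          by_cases hd : d = 0
          · refine ⟨1, X + C 1, ?_, 0, fun n _ => ?_⟩
            · intro hc
              have := congrArg (fun q => Polynomial.eval (0 : K) q) hc
              simp at this
            · rw [hdg, if_pos hd]
              simp only [Polynomial.eval_add, Polynomial.eval_X, Polynomial.eval_C,
                Polynomial.eval_one]
              exact inv_mul_cancel₀ (nat_succ_ne_zero n)
          · exact ER_congr ⟨0, fun n _ =>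
              (by rw [hdg, if_neg hd] : dg (Hinv K) d n = 0).symm⟩ ER_zero
  | algebraMap c =>
      have hdg : ∀ (d : ℤ) (n : ℕ), dg (algebraMap K (Module.End K (Polynomial K)) c) d n
          = if d = 0 then c else 0 := by
        intro d n
        by_cases h : 0 ≤ (n : ℤ) + d
        · rw [dg_nonneg h]
          unfold ent
          rw [Module.algebraMap_end_apply, coeff_smul, coeff_X_pow, smul_eq_mul]
          by_cases hd : d = 0
          · rw [if_pos hd, if_pos (by omega : ((n:ℤ)+d).toNat = n), mul_one]
          · rw [if_neg hd, if_neg (by omega : ¬ ((n:ℤ)+d).toNat = n), mul_zero]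
        · rw [dg_neg (by omega), if_neg (by omega : ¬ d = 0)]
      constructor
      · exact ⟨0, fun d n hd => by
          rw [hdg, if_neg (by rw [lt_abs] at hd; omega)]⟩
      · intro d
        by_cases hd : d = 0
        · exact ER_congr ⟨0, fun n _ =>
            (by rw [hdg, if_pos hd] :
              dg (algebraMap K (Module.End K (Polynomial K)) c) d n = c).symm⟩ (ER_const c)
        · exact ER_congr ⟨0, fun n _ =>
            (by rw [hdg, if_neg hd] :
              dg (algebraMap K (Module.End K (Polynomial K)) c) d n = 0).symm⟩ ER_zero
  | add u v hu hv ihu ihv =>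
      obtain ⟨⟨D₁, hb₁⟩, hr₁⟩ := ihu
      obtain ⟨⟨D₂, hb₂⟩, hr₂⟩ := ihv
      constructor
      · refine ⟨max D₁ D₂, fun d n hd => ?_⟩
        have h1 : (D₁ : ℤ) < |d| :=
          lt_of_le_of_lt (by exact_mod_cast Nat.le_max_left D₁ D₂) hd
        have h2 : (D₂ : ℤ) < |d| :=
          lt_of_le_of_lt (by exact_mod_cast Nat.le_max_right D₁ D₂) hd
        rw [dg_add, hb₁ d n h1, hb₂ d n h2, add_zero]
      · intro d
        exact ER_congr ⟨0, fun n _ => (dg_add u v d n).symm⟩ (ER_add (hr₁ d) (hr₂ d))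
  | mul u v hu hv ihu ihv =>
      obtain ⟨⟨D₁, hb₁⟩, hr₁⟩ := ihu
      obtain ⟨⟨D₂, hb₂⟩, hr₂⟩ := ihv
      refine ⟨⟨D₁ + D₂, Band_mul hb₁ hb₂⟩, fun d => ?_⟩
      refine ER_congr ⟨D₂, fun n hn => (dg_mul_eventual hb₂ d n hn).symm⟩ ?_
      refine ER_sum _ _ fun e he => ?_
      refine ER_mul (hr₂ _) ?_
      have : ER (fun n : ℕ => dg u (d - ((e : ℤ) - D₂)) (n + e)) :=
        ER_shift_add e (hr₁ _)
      refine ER_congr ⟨D₂, fun n hn => ?_⟩ (ER_shift_sub D₂ this)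
      congr 1
      omega
/-! ### Extraction of diagonal components and simplicity of the quotient -/

lemma val_add (a b : ↥(A1 K)) :
    ((a + b : ↥(A1 K)) : Module.End K (Polynomial K))
      = (a : Module.End K (Polynomial K)) + (b : Module.End K (Polynomial K)) := rfl

lemma val_mul (a b : ↥(A1 K)) :
    ((a * b : ↥(A1 K)) : Module.End K (Polynomial K))
      = (a : Module.End K (Polynomial K)) * (b : Module.End K (Polynomial K)) := rfl

lemma val_sub (a b : ↥(A1 K)) :
    ((a - b : ↥(A1 K)) : Module.End K (Polynomial K))
      = (a : Module.End K (Polynomial K)) - (b : Module.End K (Polynomial K)) := rfl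

lemma val_smul (c : K) (a : ↥(A1 K)) :
    ((c • a : ↥(A1 K)) : Module.End K (Polynomial K))
      = c • (a : Module.End K (Polynomial K)) := rfl

lemma val_pow (a : ↥(A1 K)) (k : ℕ) :
    ((a ^ k : ↥(A1 K)) : Module.End K (Polynomial K))
      = (a : Module.End K (Polynomial K)) ^ k := SubmonoidClass.coe_pow a k

lemma val_hs : ((hsK K : ↥(A1 K)) : Module.End K (Polynomial K)) = Hop K := rfl
lemma val_xs : ((xsK K : ↥(A1 K)) : Module.End K (Polynomial K)) = xO K := rfl
lemma val_ds : ((dsK K : ↥(A1 K)) : Module.End K (Polynomial K)) = dO K := rfl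
lemma val_hinvs : ((hinvsK K : ↥(A1 K)) : Module.End K (Polynomial K)) = Hinv K := rfl

lemma dg_sub (u v : Module.End K (Polynomial K)) (d : ℤ) (n : ℕ) :
    dg (u - v) d n = dg u d n - dg v d n := by
  unfold dg
  by_cases h : 0 ≤ (n : ℤ) + d
  · rw [dif_pos h, dif_pos h, dif_pos h]
    unfold ent
    rw [LinearMap.sub_apply, coeff_sub]
  · rw [dif_neg h, dif_neg h, dif_neg h, sub_zero]

lemma dg_adH (A : Module.End K (Polynomial K)) (e : ℤ) (n : ℕ) :
    dg (Hop K * A - A * Hop K) e n = (e : K) * dg A e n := by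
  by_cases h : 0 ≤ (n : ℤ) + e
  · rw [dg_nonneg h, dg_nonneg h]
    have hcast : ((((n : ℤ) + e).toNat : ℕ) : K) = (n : K) + (e : K) := by
      have h2 : ((((n : ℤ) + e).toNat : ℕ) : ℤ) = (n : ℤ) + e := Int.toNat_of_nonneg h
      exact_mod_cast congrArg (fun z : ℤ => (z : K)) h2
    unfold ent
    rw [LinearMap.sub_apply, coeff_sub, Module.End.mul_apply, Module.End.mul_apply,
      Hop_coeff, Hop_apply_pow, map_smul, coeff_smul, smul_eq_mul, hcast]
    ring
  · rw [dg_neg (by omega), dg_neg (by omega), mul_zero]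

lemma A1_sub_mem {I : Submodule K ↥(A1 K)} {x y : ↥(A1 K)} (hx : x ∈ I) (hy : y ∈ I) :
    x - y ∈ I := by
  have h := I.add_mem hx (I.smul_mem (-1 : K) hy)
  convert h using 1
  apply Subtype.ext
  rw [val_sub, val_add, val_smul]
  refine LinearMap.ext fun p => ?_
  simp [sub_eq_add_neg]

lemma extract {I : Submodule K ↥(A1 K)} (hI : IsTwoSided (K := K) (A := ↥(A1 K)) I) {u : ↥(A1 K)} (huI : u ∈ I)
    {D : ℕ} (hband : Band (u : Module.End K (Polynomial K)) D) (d : ℤ) :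
    ∃ w : ↥(A1 K), w ∈ I ∧
      (∀ n, dg (w : Module.End K (Polynomial K)) d n
        = dg (u : Module.End K (Polynomial K)) d n) ∧
      (∀ (e : ℤ) (n : ℕ), e ≠ d → dg (w : Module.End K (Polynomial K)) e n = 0) := by
  classical
  have main : ∀ T : Finset ℤ, d ∉ T → ∃ w : ↥(A1 K), w ∈ I ∧
      ∀ (e : ℤ) (n : ℕ), dg (w : Module.End K (Polynomial K)) e n
        = (∏ d' ∈ T, (((e : K) - (d' : K)) * (((d : K) - (d' : K)))⁻¹))
          * dg (u : Module.End K (Polynomial K)) e n := by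
    intro T
    induction T using Finset.induction_on with
    | empty => exact fun _ => ⟨u, huI, fun e n => by simp⟩
    | insert a T ha ih =>
        intro hd
        obtain ⟨w, hwI, hw⟩ := ih (fun h => hd (Finset.mem_insert_of_mem h))
        refine ⟨((d : K) - (a : K))⁻¹ • (hsK K * w - w * hsK K - (a : K) • w), ?_, ?_⟩
        · refine Submodule.smul_mem I _ (A1_sub_mem (A1_sub_mem ?_ ?_)
            (Submodule.smul_mem I _ hwI))
          · exact (hI w hwI (hsK K)).1
          · exact (hI w hwI (hsK K)).2
        · intro e n
          rw [val_smul, val_sub, val_sub, val_mul, val_mul, val_smul, val_hs]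
          rw [dg_smul, dg_sub, dg_smul, dg_adH, hw, Finset.prod_insert ha]
          ring
  obtain ⟨w, hwI, hw⟩ := main ((Finset.Icc (-(D : ℤ)) D).erase d) (Finset.notMem_erase d _)
  refine ⟨w, hwI, fun n => ?_, fun e n he => ?_⟩
  · rw [hw]
    have : (∏ d' ∈ (Finset.Icc (-(D : ℤ)) D).erase d,
        (((d : K) - (d' : K)) * (((d : K) - (d' : K)))⁻¹)) = 1 := by
      refine Finset.prod_eq_one fun d' hd' => ?_
      have hne : d ≠ d' := (Finset.ne_of_mem_erase hd').symm
      have : ((d : K) - (d' : K)) ≠ 0 := by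
        rw [sub_ne_zero]
        exact fun hc => hne (Int.cast_injective hc)
      exact mul_inv_cancel₀ this
    rw [this, one_mul]
  · rw [hw]
    by_cases hb : (D : ℤ) < |e|
    · rw [hband e n hb, mul_zero]
    · have hmem : e ∈ (Finset.Icc (-(D : ℤ)) D).erase d := by
        rw [Finset.mem_erase, Finset.mem_Icc]
        rw [not_lt, abs_le] at hb
        exact ⟨he, hb⟩
      have : (∏ d' ∈ (Finset.Icc (-(D : ℤ)) D).erase d,
          (((e : K) - (d' : K)) * (((d : K) - (d' : K)))⁻¹)) = 0 :=
        Finset.prod_eq_zero hmem (by rw [sub_self, zero_mul])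
      rw [this, zero_mul]

lemma homog_apply {A : Module.End K (Polynomial K)} {d : ℤ}
    (h0 : ∀ (e : ℤ) (n : ℕ), e ≠ d → dg A e n = 0) (n : ℕ) :
    A (X ^ n) = if h : 0 ≤ (n : ℤ) + d
      then dg A d n • X ^ (((n : ℤ) + d).toNat) else 0 := by
  by_cases hp : 0 ≤ (n : ℤ) + d
  · rw [dif_pos hp]
    apply Polynomial.ext
    intro i
    rw [coeff_smul, coeff_X_pow, smul_eq_mul]
    have hent : coeff (A (X ^ n)) i = dg A ((i : ℤ) - n) n := ent_eq_dg A i n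
    by_cases hi : (i : ℤ) - n = d
    · rw [if_pos (by omega : i = ((n : ℤ) + d).toNat), mul_one, hent, hi]
    · rw [if_neg (by omega : ¬ i = ((n : ℤ) + d).toNat), mul_zero, hent,
        h0 _ n hi]
  · rw [dif_neg hp]
    apply Polynomial.ext
    intro i
    rw [coeff_zero]
    have hent : coeff (A (X ^ n)) i = dg A ((i : ℤ) - n) n := ent_eq_dg A i n
    rw [hent, h0 _ n (by omega)]

lemma dO_pow_X (j m : ℕ) :
    ((dO K) ^ j) ((X : Polynomial K) ^ m) = ((m.descFactorial j : K)) • X ^ (m - j) := by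
  apply Polynomial.ext
  intro i
  rw [dO_pow_coeff, coeff_smul, coeff_X_pow, coeff_X_pow, smul_eq_mul]
  by_cases h1 : i + j = m
  · rw [if_pos h1, if_pos (by omega : i = m - j), mul_one, mul_one, h1]
  · rw [if_neg h1, mul_zero]
    by_cases h2 : i = m - j
    · by_cases h3 : j ≤ m
      · omega
      · rw [if_pos h2, mul_one]
        have : m.descFactorial j = 0 := by
          rw [Nat.descFactorial_eq_zero_iff_lt]
          omega
        rw [this, Nat.cast_zero]
    · rw [if_neg h2, mul_zero]

lemma Hop_pow_X (k n : ℕ) :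
    ((Hop K) ^ k) ((X : Polynomial K) ^ n) = (((n : K) + 1) ^ k) • X ^ n := by
  induction k with
  | zero => simp
  | succ k ih =>
      rw [pow_succ', Module.End.mul_apply, ih, map_smul, Hop_apply_pow, smul_smul]
      rw [pow_succ']
      ring_nf

lemma dO_smul_pow (c : K) (n : ℕ) :
    dO K (c • (X : Polynomial K) ^ (n + 1)) = (c * ((n : K) + 1)) • X ^ n := by
  rw [map_smul, dO_apply, derivative_X_pow]
  have hn1 : (n + 1 - 1) = n := rfl
  rw [hn1]
  have : (C ((n + 1 : ℕ) : K)) * (X : Polynomial K) ^ n = ((n : K) + 1) • X ^ n := by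
    rw [smul_eq_C_mul]
    norm_cast
  rw [this, smul_smul]

lemma Hinv_smul_pow (c : K) (n : ℕ) :
    Hinv K (c • (X : Polynomial K) ^ n) = (c * ((n : K) + 1)⁻¹) • X ^ n := by
  rw [map_smul, Hinv_apply_pow, smul_smul]

lemma diag_aeval (q : Polynomial K) (n : ℕ) :
    ((Polynomial.aeval (hsK K) q : ↥(A1 K)) : Module.End K (Polynomial K)) (X ^ n)
      = q.eval ((n : K) + 1) • X ^ n := by
  induction q using Polynomial.induction_on' with
  | add p q hp hq =>
      rw [map_add, val_add, LinearMap.add_apply, hp, hq, Polynomial.eval_add,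
        add_smul]
  | monomial k a =>
      rw [Polynomial.aeval_monomial]
      have : ((algebraMap K ↥(A1 K)) a * hsK K ^ k : ↥(A1 K))
          = a • (hsK K ^ k : ↥(A1 K)) := by
        rw [Algebra.smul_def]
      rw [this, val_smul, val_pow, val_hs, LinearMap.smul_apply, Hop_pow_X]
      rw [smul_smul, Polynomial.eval_monomial]

/-- The diagonal operator with entries `f(n)`. -/
noncomputable def diagOp (K : Type*) [Field K] [CharZero K] (q : Polynomial K) : ↥(A1 K) :=
  Polynomial.aeval (hsK K) (q.comp (X - C 1))

lemma diagOp_apply (q : Polynomial K) (n : ℕ) :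
    ((diagOp K q : ↥(A1 K)) : Module.End K (Polynomial K)) (X ^ n)
      = q.eval (n : K) • X ^ n := by
  rw [diagOp, diag_aeval, Polynomial.eval_comp]
  simp

lemma delta_ne_zero {f : Polynomial K} (hf : f ≠ 0) (hdeg : f.natDegree ≠ 0) :
    f.comp (X + C 1) - f ≠ 0 := by
  intro h
  have hcomp : f.comp (X + C 1) = f := by
    have := sub_eq_zero.mp h
    exact this
  have heval : ∀ x : K, f.eval (x + 1) = f.eval x := by
    intro x
    calc f.eval (x + 1) = (f.comp (X + C 1)).eval x := by
          rw [Polynomial.eval_comp]; simp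
      _ = f.eval x := by rw [hcomp]
  have hnat : ∀ n : ℕ, f.eval ((n : K)) = f.eval 0 := by
    intro n
    induction n with
    | zero => simp
    | succ n ih =>
        have := heval (n : K)
        push_cast
        rw [this, ih]
  set g := f - C (f.eval 0) with hgdef
  have hroots : ∀ n : ℕ, g.IsRoot ((n : K)) := by
    intro n
    simp only [Polynomial.IsRoot, hgdef, Polynomial.eval_sub, Polynomial.eval_C]
    rw [hnat n, sub_self]
  have hginf : {x : K | g.IsRoot x}.Infinite :=
    Set.infinite_of_injective_forall_mem (f := fun n : ℕ => (n : K))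
      Nat.cast_injective hroots
  have hg0 : g = 0 := Polynomial.eq_zero_of_infinite_isRoot g hginf
  have : f = C (f.eval 0) := by
    have := sub_eq_zero.mp hg0
    exact this
  rw [this] at hdeg
  exact hdeg (Polynomial.natDegree_C _)

lemma delta_deg {f : Polynomial K} (hdeg : f.natDegree ≠ 0)
    (hne : f.comp (X + C 1) - f ≠ 0) :
    (f.comp (X + C 1) - f).natDegree < f.natDegree := by
  have hf : f ≠ 0 := fun h => hdeg (by rw [h]; exact Polynomial.natDegree_zero)
  set m := f.natDegree with hm
  have hX1 : (X + C (1 : K)).natDegree = 1 := Polynomial.natDegree_X_add_C 1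
  have h1 : (f.comp (X + C 1)).natDegree = m := by
    rw [Polynomial.natDegree_comp, hX1, mul_one]
  have h2 : coeff (f.comp (X + C 1)) m = f.leadingCoeff := by
    have hlc : (f.comp (X + C 1)).leadingCoeff = f.leadingCoeff := by
      rw [Polynomial.leadingCoeff_comp (by rw [hX1]; omega)]
      have : (X + C (1 : K)).leadingCoeff = 1 := Polynomial.leadingCoeff_X_add_C 1
      rw [this, one_pow, mul_one]
    rw [← hlc, Polynomial.leadingCoeff, h1]
  have h3 : coeff (f.comp (X + C 1) - f) m = 0 := by
    rw [coeff_sub, h2, Polynomial.leadingCoeff, sub_self]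
  have h4 : (f.comp (X + C 1) - f).natDegree ≤ m := by
    refine le_trans (Polynomial.natDegree_sub_le _ _) ?_
    rw [h1]
    omega
  rcases lt_or_eq_of_le h4 with h | h
  · exact h
  · exfalso
    have : (f.comp (X + C 1) - f).leadingCoeff = 0 := by
      rw [Polynomial.leadingCoeff, h, h3]
    exact hne (Polynomial.leadingCoeff_eq_zero.mp this)

lemma one_mem_of_diagOp {I : Submodule K ↥(A1 K)} (hI : IsTwoSided (K := K) (A := ↥(A1 K)) I) :
    ∀ (k : ℕ) (f : Polynomial K), f ≠ 0 → f.natDegree ≤ k → diagOp K f ∈ I →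
      (1 : ↥(A1 K)) ∈ I := by
  have const_case : ∀ f : Polynomial K, f ≠ 0 → f.natDegree = 0 → diagOp K f ∈ I →
      (1 : ↥(A1 K)) ∈ I := by
    intro f hf hdeg hdI
    have hfC : f = C (f.coeff 0) := Polynomial.eq_C_of_natDegree_eq_zero hdeg
    have hc : f.coeff 0 ≠ 0 := fun h => hf (by rw [hfC, h, Polynomial.C_0])
    have hdio : diagOp K f = f.coeff 0 • (1 : ↥(A1 K)) := by
      apply Subtype.ext
      apply endExt
      intro n
      rw [diagOp_apply, val_smul, LinearMap.smul_apply]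
      have h1 : ((1 : ↥(A1 K)) : Module.End K (Polynomial K)) (X ^ n) = X ^ n := rfl
      rw [h1]
      congr 1
      conv_lhs => rw [hfC]
      rw [Polynomial.eval_C]
    have : (1 : ↥(A1 K)) = (f.coeff 0)⁻¹ • diagOp K f := by
      rw [hdio, smul_smul, inv_mul_cancel₀ hc, one_smul]
    rw [this]
    exact Submodule.smul_mem I _ hdI
  intro k
  induction k with
  | zero => exact fun f hf hd => const_case f hf (Nat.le_zero.mp hd)
  | succ k ih =>
      intro f hf hdeg hdI
      by_cases h0 : f.natDegree = 0
      · exact const_case f hf h0 hdI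
      · set Δf := f.comp (X + C 1) - f with hΔ
        have hΔne : Δf ≠ 0 := delta_ne_zero hf h0
        have hΔdeg : Δf.natDegree ≤ k := by
          have h := delta_deg h0 hΔne
          rw [← hΔ] at h
          omega
        have hBI : diagOp K Δf ∈ I := by
          have m1 : diagOp K f * xsK K ∈ I := (hI _ hdI _).2
          have m2 : xsK K * diagOp K f ∈ I := (hI _ hdI _).1
          have m3 : diagOp K f * xsK K - xsK K * diagOp K f ∈ I :=
            A1_sub_mem m1 m2
          have m4 : dsK K * (diagOp K f * xsK K - xsK K * diagOp K f) ∈ I := (hI _ m3 _).1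
          have m5 : hinvsK K * (dsK K * (diagOp K f * xsK K - xsK K * diagOp K f)) ∈ I :=
            (hI _ m4 _).1
          have heq : diagOp K Δf
              = hinvsK K * (dsK K * (diagOp K f * xsK K - xsK K * diagOp K f)) := by
            apply Subtype.ext
            apply endExt
            intro n
            have hxx : (X : Polynomial K) * X ^ n = X ^ (n + 1) := by ring
            have hinner : ((diagOp K f * xsK K - xsK K * diagOp K f : ↥(A1 K))
                : Module.End K (Polynomial K)) (X ^ n)
                = (f.eval ((n : K) + 1) - f.eval (n : K)) • X ^ (n + 1) := by
              rw [val_sub, val_mul, val_mul, val_xs, LinearMap.sub_apply,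
                Module.End.mul_apply, Module.End.mul_apply, xO_apply, hxx, diagOp_apply,
                diagOp_apply, xO_apply, mul_smul_comm, hxx, ← sub_smul]
              push_cast
              ring_nf
            rw [val_mul, val_mul, val_ds, val_hinvs, Module.End.mul_apply,
              Module.End.mul_apply, hinner, dO_smul_pow, Hinv_smul_pow, diagOp_apply]
            congr 1
            rw [hΔ, Polynomial.eval_sub, Polynomial.eval_comp, Polynomial.eval_add,
              Polynomial.eval_X, Polynomial.eval_C]
            rw [mul_assoc, mul_inv_cancel₀ (nat_succ_ne_zero n), mul_one]
          rw [heq]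
          exact m5
        exact ih Δf hΔne hΔdeg hBI
lemma one_mem_final {I : Submodule K ↥(A1 K)} (hI : IsTwoSided (K := K) (A := ↥(A1 K)) I) (hFle : Fid K ≤ I)
    {w₂ : ↥(A1 K)} (hw₂ : w₂ ∈ I) {χ : ℕ → K}
    (hdiag : ∀ n : ℕ, ((w₂ : ↥(A1 K)) : Module.End K (Polynomial K)) (X ^ n) = χ n • X ^ n)
    (hER : ER χ) (hinf : ∀ m : ℕ, ∃ n : ℕ, m ≤ n ∧ χ n ≠ 0) :
    (1 : ↥(A1 K)) ∈ I := by
  obtain ⟨f, g, hg, N, hN⟩ := hER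
  have hf : f ≠ 0 := by
    intro h0
    obtain ⟨N₂, hN₂⟩ := poly_eventually_ne_zero hg
    obtain ⟨n, hn, hχ⟩ := hinf (max N N₂)
    have h1 := hN n (le_trans (le_max_left _ _) hn)
    rw [h0, Polynomial.eval_zero] at h1
    rcases mul_eq_zero.mp h1 with h | h
    · exact hχ h
    · exact hN₂ n (le_trans (le_max_right _ _) hn) h
  set v := w₂ * diagOp K g with hv
  have hvI : v ∈ I := (hI _ hw₂ _).2
  have hvx : ∀ n : ℕ, ((v : ↥(A1 K)) : Module.End K (Polynomial K)) (X ^ n)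
      = (g.eval (n : K) * χ n) • X ^ n := by
    intro n
    rw [hv, val_mul, Module.End.mul_apply, diagOp_apply, map_smul, hdiag, smul_smul]
  have hsub : v - diagOp K f ∈ Fid K := by
    refine mem_Fid_of_vanish (m := N) fun n hn => ?_
    rw [val_sub, LinearMap.sub_apply, hvx, diagOp_apply, ← sub_smul]
    have : g.eval (n : K) * χ n - f.eval (n : K) = 0 := by
      rw [← hN n hn]; ring
    rw [this, zero_smul]
  have hfI : diagOp K f ∈ I := by
    have h1 : v - (v - diagOp K f) ∈ I := A1_sub_mem hvI (hFle hsub)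
    have h2 : v - (v - diagOp K f) = diagOp K f := sub_sub_cancel v (diagOp K f)
    rwa [h2] at h1
  exact one_mem_of_diagOp hI f.natDegree f hf le_rfl hfI

lemma descF_ER (j : ℕ) : ER (fun n : ℕ => (((n + j).descFactorial j : ℕ) : K)) := by
  refine ⟨∏ t ∈ Finset.range j, (X + C ((j : K) - (t : K))), 1, one_ne_zero, 0, fun n _ => ?_⟩
  change (((n + j).descFactorial j : ℕ) : K) * _ = _
  rw [Polynomial.eval_one, mul_one, Polynomial.eval_prod]
  rw [Nat.descFactorial_eq_prod_range, Nat.cast_prod]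
  refine Finset.prod_congr rfl fun t ht => ?_
  rw [Finset.mem_range] at ht
  rw [Polynomial.eval_add, Polynomial.eval_X, Polynomial.eval_C]
  rw [Nat.cast_sub (by omega : t ≤ n + j)]
  push_cast
  ring

lemma I_eq_top {I : Submodule K ↥(A1 K)} (hI : IsTwoSided (K := K) (A := ↥(A1 K)) I) (hbot : I ≠ ⊥)
    (hnle : ¬ I ≤ Fid K) : I = ⊤ := by
  have hFle : Fid K ≤ I := Fid_le_I hI hbot
  obtain ⟨u, huI, hu⟩ := SetLike.not_le_iff_exists.mp hnle
  obtain ⟨⟨D, hband⟩, hrat⟩ := PP_all u.2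
  -- find a diagonal which does not eventually vanish
  have hd : ∃ d : ℤ, ∀ m : ℕ, ∃ n : ℕ, m ≤ n ∧ dg (u : Module.End K (Polynomial K)) d n ≠ 0 := by
    by_contra hcon
    push_neg at hcon
    choose mf hmf using hcon
    set M := (Finset.Icc (-(D : ℤ)) D).sup mf with hM
    refine hu (mem_Fid_of_vanish (m := M) fun n hn => ?_)
    apply Polynomial.ext
    intro i
    rw [coeff_zero]
    have hent : coeff ((u : Module.End K (Polynomial K)) (X ^ n)) i
        = dg (u : Module.End K (Polynomial K)) ((i : ℤ) - n) n := ent_eq_dg _ i n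
    rw [hent]
    by_cases hb : (D : ℤ) < |(i : ℤ) - n|
    · exact hband _ n hb
    · have hmem : ((i : ℤ) - n) ∈ Finset.Icc (-(D : ℤ)) D := by
        rw [Finset.mem_Icc]
        rw [not_lt, abs_le] at hb
        exact hb
      exact hmf _ n (le_trans (le_trans (Finset.le_sup hmem) (le_of_eq hM.symm)) hn)
  obtain ⟨d, hdinf⟩ := hd
  obtain ⟨w, hwI, hwd, hw0⟩ := extract hI huI hband d
  have hwinf : ∀ m : ℕ, ∃ n : ℕ, m ≤ n ∧ dg (w : Module.End K (Polynomial K)) d n ≠ 0 := by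
    intro m
    obtain ⟨n, hn, h⟩ := hdinf m
    exact ⟨n, hn, by rw [hwd]; exact h⟩
  have hwER : ER (dg (w : Module.End K (Polynomial K)) d) :=
    ER_congr ⟨0, fun n _ => (hwd n).symm⟩ (hrat d)
  have h1 : (1 : ↥(A1 K)) ∈ I := by
    rcases le_or_gt 0 d with hd0 | hd0
    · -- d ≥ 0 : multiply by ∂^d on the left
      have hw₂I : dsK K ^ d.toNat * w ∈ I := (hI _ hwI _).1
      have hdiag : ∀ n : ℕ,
          ((dsK K ^ d.toNat * w : ↥(A1 K)) : Module.End K (Polynomial K)) (X ^ n)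
          = (dg (w : Module.End K (Polynomial K)) d n
              * (((n + d.toNat).descFactorial d.toNat : ℕ) : K)) • X ^ n := by
        intro n
        rw [val_mul, val_pow, val_ds, Module.End.mul_apply, homog_apply hw0 n,
          dif_pos (by omega : 0 ≤ (n : ℤ) + d)]
        have ht : ((n : ℤ) + d).toNat = n + d.toNat := by omega
        rw [ht, map_smul, dO_pow_X]
        rw [(by omega : n + d.toNat - d.toNat = n), smul_smul]
      refine one_mem_final hI hFle hw₂I hdiag ?_ ?_
      · exact ER_mul hwER (descF_ER d.toNat)
      · intro m
        obtain ⟨n, hn, h⟩ := hwinf m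
        refine ⟨n, hn, mul_ne_zero h ?_⟩
        rw [Nat.cast_ne_zero]
        intro h0
        rw [Nat.descFactorial_eq_zero_iff_lt] at h0
        omega
    · -- d < 0 : multiply by x^{-d} on the left
      have hw₂I : xsK K ^ (-d).toNat * w ∈ I := (hI _ hwI _).1
      have hdiag : ∀ n : ℕ,
          ((xsK K ^ (-d).toNat * w : ↥(A1 K)) : Module.End K (Polynomial K)) (X ^ n)
          = (if n < (-d).toNat then 0
              else dg (w : Module.End K (Polynomial K)) d n) • X ^ n := by
        intro n
        rw [val_mul, val_pow, val_xs, Module.End.mul_apply, homog_apply hw0 n]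
        by_cases hn : n < (-d).toNat
        · rw [dif_neg (by omega : ¬ 0 ≤ (n : ℤ) + d), map_zero, if_pos hn, zero_smul]
        · rw [dif_pos (by omega : 0 ≤ (n : ℤ) + d)]
          have ht : ((n : ℤ) + d).toNat = n - (-d).toNat := by omega
          rw [ht, map_smul, xO_pow_apply, (by omega : n - (-d).toNat + (-d).toNat = n),
            if_neg hn]
      refine one_mem_final hI hFle hw₂I hdiag ?_ ?_
      · refine ER_congr ⟨(-d).toNat, fun n hn => ?_⟩ hwER
        simp only [if_neg (by omega : ¬ n < (-d).toNat)]
      · intro m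
        obtain ⟨n, hn, h⟩ := hwinf (max m (-d).toNat)
        refine ⟨n, le_trans (le_max_left _ _) hn, ?_⟩
        simp only [if_neg (by omega : ¬ n < (-d).toNat)]
        exact h
  rw [eq_top_iff]
  intro x _
  have hx := (hI 1 h1 x).1
  rwa [mul_one] at hx


end FPart

/-- `F` is the unique proper two-sided ideal of the Jacobian algebra
`𝔸₁`; in particular it is a maximal ideal and every nonzero two-sided ideal contains
it. -/
theorem stmt3 (K : Type*) [Field K] [CharZero K] :
    ∃ Fid : Submodule K ↥(A1 K),
      (Fid : Set ↥(A1 K)) = FCar K ∧ IsTwoSided (K := K) (A := ↥(A1 K)) Fid ∧ Fid ≠ ⊥ ∧ Fid ≠ ⊤ ∧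
      ∀ I : Submodule K ↥(A1 K), IsTwoSided (K := K) (A := ↥(A1 K)) I → I ≠ ⊥ →
        Fid ≤ I ∧ (I ≠ ⊤ → I = Fid) := by
  refine ⟨Fid K, rfl, Fid_isTwoSided, Fid_ne_bot, Fid_ne_top, fun I hI hbot => ?_⟩
  refine ⟨Fid_le_I hI hbot, fun htop => ?_⟩
  have hle : I ≤ Fid K := by
    by_contra h
    exact htop (I_eq_top hI hbot h)
  exact le_antisymm hle (Fid_le_I hI hbot)
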